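/- Let φ be a topologically exact continuous map on a compact metric space X. Then for all x₀, y₀ ∈ X there exist backward orbits (x₋ᵢ) of x₀ and (y₋ᵢ) of y₀ such that liminf_{i→∞} d(x₋ᵢ, y₋ᵢ) = 0. -/

import Mathlib

open Set Metric Filter Topology

/-- for a topologically exact continuous map on a compact metric space and
any two points, there are backward orbits of the two points with liminf of the
distances equal to zero. -/
theorem stmt9 {X : Type*} [MetricSpace X] [CompactSpace X] [Nonempty X]
    (φ : X → X) (hc : Continuous φ)
    (hexact : ∀ W : Set X, IsOpen W → W.Nonempty → ∃ j : ℕ, φ^[j] '' W = univ)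
    (x₀ y₀ : X) :
    ∃ x y : ℕ → X, x 0 = x₀ ∧ y 0 = y₀ ∧
      (∀ i : ℕ, φ (x (i + 1)) = x i) ∧ (∀ i : ℕ, φ (y (i + 1)) = y i) ∧
      Filter.liminf (fun i : ℕ => dist (x i) (y i)) Filter.atTop = 0 := by
  -- φ is surjective
  have hsurj : Function.Surjective φ := by
    by_contra hne
    have hrange : IsClosed (Set.range φ) := (isCompact_range hc).isClosed
    have hne' : ((Set.range φ)ᶜ).Nonempty := by
      rw [Set.nonempty_compl]
      intro h
      exact hne (Set.range_eq_univ.mp h)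
    obtain ⟨j, hj⟩ := hexact _ hrange.isOpen_compl hne'
    rcases Nat.eq_zero_or_pos j with h0 | hpos
    · subst h0
      simp only [Function.iterate_zero, Set.image_id] at hj
      obtain ⟨p⟩ := ‹Nonempty X›
      have : φ p ∈ (Set.range φ)ᶜ := hj ▸ Set.mem_univ _
      exact this (Set.mem_range_self p)
    · obtain ⟨w, hw⟩ := hne'
      have hmem : w ∈ φ^[j] '' (Set.range φ)ᶜ := hj ▸ Set.mem_univ w
      obtain ⟨v, _, hvw⟩ := hmem
      apply hw
      rw [← hvw]
      obtain ⟨j', rfl⟩ := Nat.exists_eq_succ_of_ne_zero hpos.ne'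
      rw [Function.iterate_succ_apply']
      exact Set.mem_range_self _
  -- step lemma: backward chains landing ε-close
  have step : ∀ (a b : X) (ε : ℝ), 0 < ε →
      ∃ m a' b', 1 ≤ m ∧ φ^[m] a' = a ∧ φ^[m] b' = b ∧ dist a' b' < ε := by
    intro a b ε hε
    obtain ⟨z⟩ := ‹Nonempty X›
    obtain ⟨j, hj⟩ := hexact (ball z (ε / 3)) isOpen_ball
      (nonempty_ball.mpr (by linarith))
    rcases Nat.eq_zero_or_pos j with h0 | hpos
    · subst h0
      simp only [Function.iterate_zero, Set.image_id] at hj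
      obtain ⟨a', ha'⟩ := hsurj a
      obtain ⟨b', hb'⟩ := hsurj b
      refine ⟨1, a', b', le_refl 1, by simpa using ha', by simpa using hb', ?_⟩
      have h1 : a' ∈ ball z (ε / 3) := hj ▸ Set.mem_univ a'
      have h2 : b' ∈ ball z (ε / 3) := hj ▸ Set.mem_univ b'
      rw [mem_ball] at h1 h2
      have := dist_triangle_right a' b' z
      linarith
    · have ha : a ∈ φ^[j] '' ball z (ε / 3) := hj ▸ Set.mem_univ a
      have hb : b ∈ φ^[j] '' ball z (ε / 3) := hj ▸ Set.mem_univ b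
      obtain ⟨a', ha', haj⟩ := ha
      obtain ⟨b', hb', hbj⟩ := hb
      refine ⟨j, a', b', hpos, haj, hbj, ?_⟩
      rw [mem_ball] at ha' hb'
      have := dist_triangle_right a' b' z
      linarith
  -- one-step of the construction, as a function on states
  have key : ∀ p : ℕ × X × X, ∃ q : ℕ × X × X,
      p.1 < q.1 ∧ φ^[q.1 - p.1] q.2.1 = p.2.1 ∧ φ^[q.1 - p.1] q.2.2 = p.2.2 ∧
      dist q.2.1 q.2.2 < 1 / (p.1 + 1) := by
    rintro ⟨N, a, b⟩
    have hε : (0 : ℝ) < 1 / (N + 1) := by positivity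
    obtain ⟨m, a', b', hm, ha, hb, hd⟩ := step a b _ hε
    refine ⟨(N + m, a', b'), by omega, ?_, ?_, hd⟩
    · rw [show N + m - N = m by omega]; exact ha
    · rw [show N + m - N = m by omega]; exact hb
  choose F hlt hFa hFb hFd using key
  set s : ℕ → ℕ × X × X := fun k => F^[k] (0, x₀, y₀) with hs
  have hssucc : ∀ k, s (k + 1) = F (s k) := fun k =>
    Function.iterate_succ_apply' F k _
  set n : ℕ → ℕ := fun k => (s k).1 with hn
  set a : ℕ → X := fun k => (s k).2.1 with ha
  set b : ℕ → X := fun k => (s k).2.2 with hb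
  have hn0 : n 0 = 0 := rfl
  have ha0 : a 0 = x₀ := rfl
  have hb0 : b 0 = y₀ := rfl
  have hnlt : ∀ k, n k < n (k + 1) := by
    intro k; have := hlt (s k); rw [← hssucc k] at this; exact this
  have haC : ∀ k, φ^[n (k + 1) - n k] (a (k + 1)) = a k := by
    intro k; have := hFa (s k); rw [← hssucc k] at this; exact this
  have hbC : ∀ k, φ^[n (k + 1) - n k] (b (k + 1)) = b k := by
    intro k; have := hFb (s k); rw [← hssucc k] at this; exact this
  have hdC : ∀ k, dist (a (k + 1)) (b (k + 1)) < 1 / (n k + 1) := by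
    intro k; have := hFd (s k); rw [← hssucc k] at this; exact this
  have hmono : StrictMono n := strictMono_nat_of_lt_succ hnlt
  have hkn : ∀ k, k ≤ n k := fun k => hmono.le_apply
  -- chain lemma
  have chain : ∀ k d, φ^[n (k + d) - n k] (a (k + d)) = a k ∧
      φ^[n (k + d) - n k] (b (k + d)) = b k := by
    intro k d
    induction d with
    | zero => simp
    | succ d ih =>
      have h1 : n k ≤ n (k + d) := hmono.monotone (Nat.le_add_right _ _)
      have h2 : n (k + d) < n (k + d + 1) := hnlt _
      have harith : n (k + d + 1) - n k
          = (n (k + d) - n k) + (n (k + d + 1) - n (k + d)) := by omega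
      constructor
      · show φ^[n (k + d + 1) - n k] (a (k + d + 1)) = a k
        rw [harith, Function.iterate_add_apply, haC (k + d)]
        exact ih.1
      · show φ^[n (k + d + 1) - n k] (b (k + d + 1)) = b k
        rw [harith, Function.iterate_add_apply, hbC (k + d)]
        exact ih.2
  have chain' : ∀ k l, k ≤ l → φ^[n l - n k] (a l) = a k ∧
      φ^[n l - n k] (b l) = b k := by
    intro k l h
    obtain ⟨d, rfl⟩ := Nat.exists_eq_add_of_le h
    exact chain k d
  refine ⟨fun i => φ^[n (i + 1) - i] (a (i + 1)),
          fun i => φ^[n (i + 1) - i] (b (i + 1)), ?_, ?_, ?_, ?_, ?_⟩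
  · show φ^[n 1 - 0] (a 1) = x₀
    have := (chain' 0 1 (by omega)).1
    rw [hn0] at this
    rw [Nat.sub_zero] at this ⊢
    rw [this, ha0]
  · show φ^[n 1 - 0] (b 1) = y₀
    have := (chain' 0 1 (by omega)).2
    rw [hn0] at this
    rw [Nat.sub_zero] at this ⊢
    rw [this, hb0]
  · intro i
    show φ (φ^[n (i + 1 + 1) - (i + 1)] (a (i + 1 + 1))) = φ^[n (i + 1) - i] (a (i + 1))
    have h1 : i + 1 ≤ n (i + 1) := hkn (i + 1)
    have h2 : n (i + 1) < n (i + 1 + 1) := hnlt (i + 1)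
    rw [← Function.iterate_succ_apply' φ, Nat.succ_eq_add_one]
    rw [show (n (i + 1 + 1) - (i + 1)) + 1
        = (n (i + 1) - i) + (n (i + 1 + 1) - n (i + 1)) by omega]
    rw [Function.iterate_add_apply, haC (i + 1)]
  · intro i
    show φ (φ^[n (i + 1 + 1) - (i + 1)] (b (i + 1 + 1))) = φ^[n (i + 1) - i] (b (i + 1))
    have h1 : i + 1 ≤ n (i + 1) := hkn (i + 1)
    have h2 : n (i + 1) < n (i + 1 + 1) := hnlt (i + 1)
    rw [← Function.iterate_succ_apply' φ, Nat.succ_eq_add_one]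
    rw [show (n (i + 1 + 1) - (i + 1)) + 1
        = (n (i + 1) - i) + (n (i + 1 + 1) - n (i + 1)) by omega]
    rw [Function.iterate_add_apply, hbC (i + 1)]
  · -- liminf
    set f : ℕ → ℝ := fun i =>
      dist (φ^[n (i + 1) - i] (a (i + 1))) (φ^[n (i + 1) - i] (b (i + 1))) with hf
    -- value at indices n (k+1)
    have hval : ∀ k, f (n (k + 1)) = dist (a (k + 1)) (b (k + 1)) := by
      intro k
      have h1 : k + 1 ≤ n (k + 1) + 1 := by have := hkn (k + 1); omega
      have hA := (chain' (k + 1) (n (k + 1) + 1) h1).1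
      have hB := (chain' (k + 1) (n (k + 1) + 1) h1).2
      show dist (φ^[n (n (k + 1) + 1) - n (k + 1)] (a (n (k + 1) + 1)))
          (φ^[n (n (k + 1) + 1) - n (k + 1)] (b (n (k + 1) + 1)))
        = dist (a (k + 1)) (b (k + 1))
      rw [hA, hB]
    have hbddbelow : IsBoundedUnder (· ≥ ·) atTop f :=
      isBoundedUnder_of ⟨0, fun i => dist_nonneg⟩
    have hbddabove : IsBoundedUnder (· ≤ ·) atTop f :=
      isBoundedUnder_of ⟨Metric.diam (Set.univ : Set X), fun i =>
        Metric.dist_le_diam_of_mem isCompact_univ.isBounded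
          (Set.mem_univ _) (Set.mem_univ _)⟩
    have hfreq : ∀ ε : ℝ, 0 < ε → ∃ᶠ i in atTop, f i ≤ ε := by
      intro ε hε
      rw [Filter.frequently_atTop]
      intro m
      obtain ⟨K, hK⟩ := exists_nat_one_div_lt hε
      refine ⟨n (max m K + 1), ?_, ?_⟩
      · calc m ≤ max m K := le_max_left _ _
          _ ≤ n (max m K) := hkn _
          _ ≤ n (max m K + 1) := (hnlt _).le
      · rw [hval (max m K)]
        have hd := hdC (max m K)
        have hKn : (K : ℝ) + 1 ≤ (n (max m K) : ℝ) + 1 := by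
          have : K ≤ n (max m K) := le_trans (le_max_right _ _) (hkn _)
          exact_mod_cast by omega
        have hle : (1 : ℝ) / (n (max m K) + 1) ≤ 1 / (K + 1) := by
          apply one_div_le_one_div_of_le
          · positivity
          · exact hKn
        linarith
    have hle : liminf f atTop ≤ 0 := by
      by_contra h
      push_neg at h
      have h2 : liminf f atTop ≤ liminf f atTop / 2 :=
        liminf_le_of_frequently_le (hfreq _ (by linarith)) hbddbelow
      linarith
    have hge : (0 : ℝ) ≤ liminf f atTop :=
      le_liminf_of_le hbddabove.isCoboundedUnder_ge
        (Eventually.of_forall fun i => dist_nonneg)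
    exact le_antisymm hle hge
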